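/- Let k be a field of characteristic 2, n ≥ 1, and λ ∈ k with λ ≠ 0. Consider the two representations of the Klein four group G = ⟨σ, τ⟩ on k^{2n}: in the first, σ acts as I_{2n} + E(J_n(λ)) and τ acts as I_{2n} + E(I_n); in the second, σ acts as I_{2n} + E(I_n) and τ acts as I_{2n} + E(J_n(λ⁻¹)). Then these two representations are isomorphic; that is, there exists an invertible 2n × 2n matrix P over k such that P·(I_{2n} + E(J_n(λ))) = (I_{2n} + E(I_n))·P and P·(I_{2n} + E(I_n)) = (I_{2n} + E(J_n(λ⁻¹)))·P. -/

import Mathlib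

/-- The `n × n` upper-triangular Jordan block with eigenvalue `lam`. -/
def jordanBlock (k : Type*) [Zero k] [One k] (n : ℕ) (lam : k) :
    Matrix (Fin n) (Fin n) k :=
  Matrix.of fun i j => if (j : ℕ) = (i : ℕ) then lam
    else if (j : ℕ) = (i : ℕ) + 1 then 1 else 0

/-- The `2n × 2n` block matrix `[[0, X], [0, 0]]`. -/
def eBlock (k : Type*) [Zero k] (n : ℕ) (X : Matrix (Fin n) (Fin n) k) :
    Matrix (Fin n ⊕ Fin n) (Fin n ⊕ Fin n) k :=
  Matrix.fromBlocks 0 X 0 0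

section Aux

variable {k : Type*} [Field k] {n : ℕ}

/-- Multiplying on the right by a Jordan block, entrywise. -/
lemma mul_jordan (M : Matrix (Fin n) (Fin n) k) (μ : k) (i j : Fin n) :
    (M * jordanBlock k n μ) i j =
      μ * M i j + (if h : (j : ℕ) = 0 then 0
        else M i ⟨(j : ℕ) - 1, lt_of_le_of_lt (Nat.sub_le _ _) j.isLt⟩) := by
  rw [Matrix.mul_apply]
  have hterm : ∀ x : Fin n, M i x * jordanBlock k n μ x j =
      (if x = j then μ * M i j else 0) +
      (if (j : ℕ) = (x : ℕ) + 1 then M i x else 0) := by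
    intro x
    simp only [jordanBlock, Matrix.of_apply]
    by_cases h1 : (j : ℕ) = (x : ℕ)
    · have hx : x = j := Fin.ext h1.symm
      subst hx
      rw [if_pos rfl, if_pos rfl, if_neg (by omega)]
      ring
    · have hxj : ¬ (x = j) := fun h => h1 (by rw [h])
      rw [if_neg h1, if_neg hxj]
      by_cases h2 : (j : ℕ) = (x : ℕ) + 1
      · rw [if_pos h2, if_pos h2]; ring
      · rw [if_neg h2, if_neg h2]; ring
  rw [Finset.sum_congr rfl (fun x _ => hterm x), Finset.sum_add_distrib]
  congr 1
  · rw [Finset.sum_ite_eq' Finset.univ j (fun _ => μ * M i j)]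
    simp
  · by_cases hj : (j : ℕ) = 0
    · rw [dif_pos hj]
      apply Finset.sum_eq_zero
      intro x _
      rw [if_neg (by omega)]
    · rw [dif_neg hj]
      have hlt : (j : ℕ) - 1 < n := lt_of_le_of_lt (Nat.sub_le _ _) j.isLt
      have hs := Finset.sum_eq_single (s := (Finset.univ : Finset (Fin n)))
        (f := fun x => if (j : ℕ) = (x : ℕ) + 1 then M i x else 0)
        (⟨(j : ℕ) - 1, hlt⟩ : Fin n)
        (fun x _ hx => if_neg (fun hc => hx (Fin.ext (by simp only [] at hc ⊢; omega))))
        (fun h => absurd (Finset.mem_univ _) h)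
      rw [hs]
      simp [Nat.sub_add_cancel (Nat.one_le_iff_ne_zero.mpr hj)]

/-- Multiplying on the left by a Jordan block, entrywise. -/
lemma jordan_mul (M : Matrix (Fin n) (Fin n) k) (μ : k) (i j : Fin n) :
    (jordanBlock k n μ * M) i j =
      μ * M i j + (if h : (i : ℕ) + 1 < n then M ⟨(i : ℕ) + 1, h⟩ j else 0) := by
  rw [Matrix.mul_apply]
  have hterm : ∀ x : Fin n, jordanBlock k n μ i x * M x j =
      (if x = i then μ * M i j else 0) +
      (if (x : ℕ) = (i : ℕ) + 1 then M x j else 0) := by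
    intro x
    simp only [jordanBlock, Matrix.of_apply]
    by_cases h1 : (x : ℕ) = (i : ℕ)
    · have hx : x = i := Fin.ext h1
      subst hx
      rw [if_pos rfl, if_pos rfl, if_neg (by omega)]
      ring
    · have hxi : ¬ (x = i) := fun h => h1 (by rw [h])
      rw [if_neg h1, if_neg hxi]
      by_cases h2 : (x : ℕ) = (i : ℕ) + 1
      · rw [if_pos h2, if_pos h2]; ring
      · rw [if_neg h2, if_neg h2]; ring
  rw [Finset.sum_congr rfl (fun x _ => hterm x), Finset.sum_add_distrib]
  congr 1
  · rw [Finset.sum_ite_eq' Finset.univ i (fun _ => μ * M i j)]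
    simp
  · by_cases hi : (i : ℕ) + 1 < n
    · rw [dif_pos hi]
      have hs := Finset.sum_eq_single (s := (Finset.univ : Finset (Fin n)))
        (f := fun x => if (x : ℕ) = (i : ℕ) + 1 then M x j else 0)
        (⟨(i : ℕ) + 1, hi⟩ : Fin n)
        (fun x _ hx => if_neg (fun hc => hx (Fin.ext (by simpa using hc))))
        (fun h => absurd (Finset.mem_univ _) h)
      rw [hs]
      simp
    · rw [dif_neg hi]
      apply Finset.sum_eq_zero
      intro x _
      rw [if_neg (by omega)]

/-- The intertwining matrix. -/
def coeffA (k : Type*) [Field k] (n : ℕ) (lam : k) : Matrix (Fin n) (Fin n) k :=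
  Matrix.of fun i j => (Nat.choose (n - 1 - (i : ℕ)) (n - 1 - (j : ℕ)) : k) *
    lam ^ ((n - 1 - (i : ℕ)) + (n - 1 - (j : ℕ)))

lemma pascal_calc (hchar : CharP k 2) (lam : k) (hlam : lam ≠ 0) (c b : ℕ) :
    lam⁻¹ * ((Nat.choose (c + 1) (b + 1) : k) * lam ^ ((c + 1) + (b + 1))) +
      (lam * ((Nat.choose c b : k) * lam ^ (c + b)) +
        (Nat.choose c (b + 1) : k) * lam ^ (c + (b + 1))) = 0 := by
  have h2 : (2 : k) = 0 := by
    have := CharP.cast_eq_zero k 2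
    push_cast at this
    exact this
  have he : (c + 1) + (b + 1) = (c + b + 1) + 1 := by ring
  rw [he, Nat.choose_succ_succ, pow_succ]
  push_cast
  have : lam⁻¹ * (((Nat.choose c b : k) + (Nat.choose c (b + 1) : k)) *
      (lam ^ (c + b + 1) * lam)) =
      ((Nat.choose c b : k) + (Nat.choose c (b + 1) : k)) * lam ^ (c + b + 1) := by
    field_simp
  rw [this]
  have h3 : c + (b + 1) = c + b + 1 := by ring
  rw [h3]
  have h4 : lam * ((Nat.choose c b : k) * lam ^ (c + b)) =
      (Nat.choose c b : k) * lam ^ (c + b + 1) := by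
    rw [pow_succ]; ring
  rw [h4]
  linear_combination (((Nat.choose c b : k) + (Nat.choose c (b + 1) : k)) *
    lam ^ (c + b + 1)) * h2

/-- The key intertwining identity: `J(λ⁻¹) · A · J(λ) = A`. -/
lemma key (hchar : CharP k 2) (lam : k) (hlam : lam ≠ 0) :
    jordanBlock k n lam⁻¹ * (coeffA k n lam * jordanBlock k n lam) = coeffA k n lam := by
  ext i j
  simp only [jordan_mul, mul_jordan, coeffA, Matrix.of_apply]
  have hi2 : (i : ℕ) < n := i.isLt
  have hj2 : (j : ℕ) < n := j.isLt
  by_cases hj : (j : ℕ) = 0 <;> by_cases hi : (i : ℕ) + 1 < n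
  · -- j = 0, i+1 < n
    rw [dif_pos hj, dif_pos hi, dif_pos hj]
    have hz : Nat.choose (n - 1 - ((i : ℕ) + 1)) (n - 1 - (j : ℕ)) = 0 :=
      Nat.choose_eq_zero_of_lt (by omega)
    rw [hz]
    push_cast
    field_simp
    ring
  · -- j = 0, i+1 = n
    rw [dif_pos hj, dif_neg hi]
    field_simp
    ring
  · -- j ≥ 1, i+1 < n
    rw [dif_neg hj, dif_pos hi, dif_neg hj]
    have ha : 1 ≤ n - 1 - (i : ℕ) := by omega
    obtain ⟨c, hc⟩ : ∃ c, n - 1 - (i : ℕ) = c + 1 := ⟨n - 1 - (i : ℕ) - 1, by omega⟩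
    have hb1 : n - 1 - ((j : ℕ) - 1) = (n - 1 - (j : ℕ)) + 1 := by omega
    have ha1 : n - 1 - ((i : ℕ) + 1) = c := by omega
    rw [hc, hb1, ha1]
    have hp := pascal_calc hchar lam hlam c (n - 1 - (j : ℕ))
    linear_combination hp + (lam * lam ^ c * lam ^ (n - 1 - (j : ℕ)) *
      ((Nat.choose (c + 1) (n - 1 - (j : ℕ))) : k)) * (inv_mul_cancel₀ hlam)
  · -- j ≥ 1, i+1 = n
    rw [dif_neg hj, dif_neg hi]
    have hz : Nat.choose (n - 1 - (i : ℕ)) (n - 1 - ((j : ℕ) - 1)) = 0 :=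
      Nat.choose_eq_zero_of_lt (by omega)
    rw [hz]
    push_cast
    field_simp
    ring

lemma coeffA_triangular (lam : k) : (coeffA k n lam).BlockTriangular id := by
  intro i j hij
  have hi2 : (i : ℕ) < n := i.isLt
  have hij' : (j : ℕ) < (i : ℕ) := hij
  simp only [coeffA, Matrix.of_apply]
  rw [Nat.choose_eq_zero_of_lt (by omega)]
  push_cast
  ring

lemma jordan_triangular (lam : k) : (jordanBlock k n lam).BlockTriangular id := by
  intro i j hij
  have hij' : (j : ℕ) < (i : ℕ) := hij
  simp only [jordanBlock, Matrix.of_apply]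
  rw [if_neg (by omega), if_neg (by omega)]

lemma coeffA_det_ne_zero (lam : k) (hlam : lam ≠ 0) : (coeffA k n lam).det ≠ 0 := by
  rw [Matrix.det_of_upperTriangular (coeffA_triangular lam)]
  apply Finset.prod_ne_zero_iff.mpr
  intro i _
  simp only [coeffA, Matrix.of_apply, Nat.choose_self]
  push_cast
  simp [pow_ne_zero _ hlam]

lemma jordan_det_ne_zero (lam : k) (hlam : lam ≠ 0) : (jordanBlock k n lam).det ≠ 0 := by
  rw [Matrix.det_of_upperTriangular (jordan_triangular lam)]
  apply Finset.prod_ne_zero_iff.mpr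
  intro i _
  simp [jordanBlock, hlam]

end Aux

/-- Over a field `k` of characteristic 2 with `λ ≠ 0`, the Klein four
representation on `k^{2n}` in which `σ` acts as `I + E(Jₙ(λ))` and `τ` as `I + E(Iₙ)` is
isomorphic to the one in which `σ` acts as `I + E(Iₙ)` and `τ` as `I + E(Jₙ(λ⁻¹))`:
there is an invertible `P` intertwining the two actions. -/
theorem klein_four_rep_swap_iso
    (k : Type*) [Field k] (hchar : CharP k 2) (n : ℕ) (hn : 1 ≤ n)
    (lam : k) (hlam : lam ≠ 0) :
    ∃ P : Matrix (Fin n ⊕ Fin n) (Fin n ⊕ Fin n) k, IsUnit P ∧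
      P * (1 + eBlock k n (jordanBlock k n lam)) = (1 + eBlock k n 1) * P ∧
      P * (1 + eBlock k n 1) = (1 + eBlock k n (jordanBlock k n lam⁻¹)) * P := by
  set A := coeffA k n lam with hA
  set J := jordanBlock k n lam with hJ
  set J' := jordanBlock k n lam⁻¹ with hJ'
  have hone : ∀ X : Matrix (Fin n) (Fin n) k,
      (1 : Matrix (Fin n ⊕ Fin n) (Fin n ⊕ Fin n) k) + eBlock k n X =
        Matrix.fromBlocks 1 X 0 1 := by
    intro X
    rw [eBlock, ← Matrix.fromBlocks_one, Matrix.fromBlocks_add]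
    simp
  refine ⟨Matrix.fromBlocks A 0 0 (A * J), ?_, ?_, ?_⟩
  · rw [Matrix.isUnit_iff_isUnit_det, Matrix.det_fromBlocks_zero₂₁, Matrix.det_mul,
      isUnit_iff_ne_zero]
    exact mul_ne_zero (coeffA_det_ne_zero lam hlam)
      (mul_ne_zero (coeffA_det_ne_zero lam hlam) (jordan_det_ne_zero lam hlam))
  · rw [hone, hone, Matrix.fromBlocks_multiply, Matrix.fromBlocks_multiply]
    simp
  · rw [hone, hone, Matrix.fromBlocks_multiply, Matrix.fromBlocks_multiply]
    have hkey : J' * (A * J) = A := key hchar lam hlam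
    simp [hkey]
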